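/- Let G be a finite directed multigraph and let e be an edge of G that lies on no directed cycle. Then there exists a directed trail in G containing e whose first vertex u satisfies deg⁺(u) > deg⁻(u), whose last vertex z satisfies deg⁻(z) > deg⁺(z), and u ≠ z. -/

import Mathlib

/-- A directed walk in a multigraph (edge type `E`, maps `tail`, `head`):
vertices `u : Fin (m+1) → V`, edges `f : Fin m → E` with matching endpoints. -/
def IsWalk {V E : Type} (tail head : E → V) {m : ℕ}
    (u : Fin (m + 1) → V) (f : Fin m → E) : Prop :=
  ∀ r : Fin m, tail (f r) = u r.castSucc ∧ head (f r) = u r.succ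

/-- A directed cycle: a closed walk with at least one edge, pairwise distinct
edges, and pairwise distinct vertices except for the coinciding endpoints. -/
def IsCycle {V E : Type} (tail head : E → V) {m : ℕ}
    (u : Fin (m + 1) → V) (f : Fin m → E) : Prop :=
  IsWalk tail head u f ∧ 1 ≤ m ∧ Function.Injective f ∧
    u 0 = u (Fin.last m) ∧
    ∀ i j : Fin m, u i.castSucc = u j.castSucc → i = j

theorem aux_exists_injective_walk {V E : Type} (tail head : E → V) (x y : V) :
    ∀ m : ℕ, (∃ (u : Fin (m+1) → V) (f : Fin m → E),
        IsWalk tail head u f ∧ u 0 = x ∧ u (Fin.last m) = y) →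
      ∃ (k : ℕ) (p : Fin (k+1) → V) (g : Fin k → E),
        IsWalk tail head p g ∧ Function.Injective p ∧ p 0 = x ∧ p (Fin.last k) = y := by
  intro m
  induction m using Nat.strong_induction_on with
  | _ m ih =>
  rintro ⟨u, f, hw, hx, hy⟩
  by_cases hinj : Function.Injective u
  · exact ⟨m, u, f, hw, hinj, hx, hy⟩
  obtain ⟨i, j, hij, hu⟩ : ∃ i j : Fin (m+1), i.val < j.val ∧ u i = u j := by
    simp only [Function.Injective, not_forall] at hinj
    obtain ⟨a, b, hab, hne⟩ := hinj
    rcases Nat.lt_or_ge a.val b.val with h | h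
    · exact ⟨a, b, h, hab⟩
    · have : b.val < a.val := lt_of_le_of_ne h (fun hv => hne (Fin.ext hv.symm))
      exact ⟨b, a, this, hab.symm⟩
  have hi := i.isLt
  have hj := j.isLt
  set d := j.val - i.val with hd
  have hd1 : 1 ≤ d := by omega
  have hm' : m - d < m := by omega
  have uEq : ∀ (a b : Fin (m+1)), a.val = b.val → u a = u b :=
    fun a b h => congrArg u (Fin.ext h)
  refine ih (m - d) hm'
    ⟨fun k => u ⟨if k.val ≤ i.val then k.val else k.val + d, by have := k.isLt; split <;> omega⟩,
     fun k => f ⟨if k.val < i.val then k.val else k.val + d, by have := k.isLt; split <;> omega⟩,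
     ?_, ?_, ?_⟩
  · intro k
    have hk := k.isLt
    constructor
    · rw [(hw _).1]
      rcases Nat.lt_or_ge k.val i.val with h | h
      · apply uEq
        simp only [Fin.coe_castSucc, Fin.val_succ]
        split_ifs <;> omega
      · rcases Nat.eq_or_lt_of_le h with h2 | h2
        · have e1 : u (⟨if k.val < i.val then k.val else k.val + d, by split <;> omega⟩ :
              Fin m).castSucc = u j := uEq _ _ (by simp only [Fin.coe_castSucc]; split_ifs <;> omega)
          rw [e1, ← hu]
          apply uEq
          simp only [Fin.val_mk, Fin.coe_castSucc, Fin.val_succ]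
          split_ifs <;> omega
        · apply uEq
          simp only [Fin.coe_castSucc, Fin.val_succ]
          split_ifs <;> omega
    · rw [(hw _).2]
      apply uEq
      simp only [Fin.val_succ, Fin.coe_castSucc]
      split_ifs <;> omega
  · rw [← hx]
    apply uEq
    simp only [Fin.val_mk, Fin.val_zero]
    simp
  · rcases Nat.lt_or_ge i.val (m - d) with h | h
    · rw [← hy]
      apply uEq
      simp only [Fin.val_last]
      split_ifs <;> omega
    · have h1 : m - d = i.val := by omega
      have h2 : j.val = m := by omega
      have e1 : u ⟨if (Fin.last (m-d)).val ≤ i.val then (Fin.last (m-d)).val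
          else (Fin.last (m-d)).val + d, by have := (Fin.last (m-d)).isLt; split <;> omega⟩ = u i :=
        uEq _ _ (by simp only [Fin.val_mk, Fin.val_last]; split_ifs <;> omega)
      exact e1.trans (hu.trans ((uEq j (Fin.last m) (by simp only [Fin.val_last]; omega)).trans hy))

theorem aux_cycle_of_path {V E : Type} (tail head : E → V) (e : E) (k : ℕ)
    (p : Fin (k+1) → V) (g : Fin k → E) (hw : IsWalk tail head p g)
    (hp : Function.Injective p) (h0 : p 0 = head e) (hl : p (Fin.last k) = tail e) :
    ∃ (m : ℕ) (u : Fin (m + 1) → V) (f : Fin m → E),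
      IsCycle tail head u f ∧ ∃ r, f r = e := by
  refine ⟨k + 1, Fin.cons (tail e) p, Fin.cons e g, ⟨?_, Nat.le_add_left 1 k, ?_, ?_, ?_⟩, 0, rfl⟩
  · intro r
    induction r using Fin.cases with
    | zero =>
      constructor
      · rw [Fin.cons_zero]
        rfl
      · rw [Fin.cons_zero]
        have : (0 : Fin (k+1)).succ = Fin.succ 0 := rfl
        rw [this, Fin.cons_succ, h0]
    | succ i =>
      constructor
      · rw [Fin.cons_succ, ← Fin.succ_castSucc, Fin.cons_succ]
        exact (hw i).1
      · rw [Fin.cons_succ, Fin.cons_succ]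
        exact (hw i).2
  · -- injectivity of Fin.cons e g
    have hcl : ∀ i : Fin k, i.castSucc ≠ Fin.last k := by
      intro i h
      have := congrArg Fin.val h
      simp only [Fin.coe_castSucc, Fin.val_last] at this
      exact absurd this (Nat.ne_of_lt i.isLt)
    have hge : ∀ i : Fin k, g i ≠ e := by
      intro i h
      have h1 : p i.castSucc = tail e := by rw [← h, (hw i).1]
      exact hcl i (hp (h1.trans hl.symm))
    intro a b hab
    induction a using Fin.cases with
    | zero =>
      induction b using Fin.cases with
      | zero => rfl
      | succ jb =>
        rw [Fin.cons_zero, Fin.cons_succ] at hab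
        exact absurd hab.symm (hge jb)
    | succ ia =>
      induction b using Fin.cases with
      | zero =>
        rw [Fin.cons_zero, Fin.cons_succ] at hab
        exact absurd hab (hge ia)
      | succ jb =>
        rw [Fin.cons_succ, Fin.cons_succ] at hab
        have : p ia.castSucc = p jb.castSucc := by
          rw [← (hw ia).1, ← (hw jb).1, hab]
        exact congrArg Fin.succ (Fin.castSucc_injective k (hp this))
  · rw [Fin.cons_zero, ← Fin.succ_last, Fin.cons_succ, hl]
  · have hcl : ∀ i : Fin k, i.castSucc ≠ Fin.last k := by
      intro i h
      have := congrArg Fin.val h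
      simp only [Fin.coe_castSucc, Fin.val_last] at this
      exact absurd this (Nat.ne_of_lt i.isLt)
    intro a b hab
    induction a using Fin.cases with
    | zero =>
      induction b using Fin.cases with
      | zero => rfl
      | succ jb =>
        rw [Fin.castSucc_zero, Fin.cons_zero, ← Fin.succ_castSucc, Fin.cons_succ] at hab
        have : p (Fin.last k) = p jb.castSucc := hl.trans hab
        exact absurd (hp this).symm (hcl jb)
    | succ ia =>
      induction b using Fin.cases with
      | zero =>
        rw [Fin.castSucc_zero, Fin.cons_zero, ← Fin.succ_castSucc, Fin.cons_succ] at hab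
        have : p (Fin.last k) = p ia.castSucc := hl.trans hab.symm
        exact absurd (hp this).symm (hcl ia)
      | succ jb =>
        rw [← Fin.succ_castSucc, ← Fin.succ_castSucc, Fin.cons_succ, Fin.cons_succ] at hab
        exact congrArg Fin.succ (Fin.castSucc_injective k (hp hab))

theorem aux_walk_head_tail {V E : Type} (tail head : E → V) (e : E)
    (n : ℕ) (u : Fin (n + 2) → V) (f : Fin (n + 1) → E)
    (hw : IsWalk tail head u f) (hclosed : u 0 = u (Fin.last (n + 1)))
    (r : Fin (n + 1)) (hr : f r = e) :
    ∃ (k : ℕ) (w : Fin (k + 1) → V) (g : Fin k → E),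
      IsWalk tail head w g ∧ w 0 = head e ∧ w (Fin.last k) = tail e := by
  have uEq : ∀ (a b : Fin (n+2)), a.val = b.val → u a = u b :=
    fun a b h => congrArg u (Fin.ext h)
  have hrn := r.isLt
  have hmlt : ∀ a : ℕ, a % (n+1) < n + 1 := fun a => Nat.mod_lt _ (by omega)
  refine ⟨n, fun k => u ⟨(r.val + 1 + k.val) % (n+1), by have := hmlt (r.val+1+k.val); omega⟩,
    fun k => f ⟨(r.val + 1 + k.val) % (n+1), hmlt _⟩, ?_, ?_, ?_⟩
  · intro k
    have hk := k.isLt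
    constructor
    · rw [(hw _).1]
      apply uEq
      simp only [Fin.coe_castSucc, Fin.val_mk]
    · rw [(hw _).2]
      have hmod : ((r.val + 1 + k.val) % (n+1) + 1) % (n+1)
          = (r.val + 1 + (k.val + 1)) % (n+1) := by
        rw [Nat.mod_add_mod]
        congr 1

      rcases Nat.lt_or_ge ((r.val + 1 + k.val) % (n+1) + 1) (n+1) with h | h
      · apply uEq
        simp only [Fin.val_succ, Fin.val_mk]
        rw [← hmod, Nat.mod_eq_of_lt h]
      · have h1 : (r.val + 1 + k.val) % (n+1) = n := by have := hmlt (r.val+1+k.val); omega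
        have h2 : (r.val + 1 + (k.val + 1)) % (n+1) = 0 := by
          rw [← hmod, h1, Nat.mod_self]
        have l1 : u (⟨(r.val + 1 + k.val) % (n+1), hmlt _⟩ : Fin (n+1)).succ
            = u (Fin.last (n+1)) :=
          uEq _ _ (by simp only [Fin.val_succ, Fin.val_mk, Fin.val_last]; omega)
        rw [l1, ← hclosed]
        exact uEq _ _ (by simp only [Fin.val_mk, Fin.val_zero, Fin.val_succ]; omega)
  · rcases Nat.lt_or_ge (r.val + 1) (n+1) with h | h
    · rw [← hr, (hw r).2]
      apply uEq
      simp only [Fin.val_mk, Fin.val_succ, Fin.val_zero]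
      rw [Nat.add_zero, Nat.mod_eq_of_lt h]
    · have hrv : r.val = n := by omega
      have l1 : u ⟨(r.val + 1 + (0:Fin (n+1)).val) % (n+1),
          by have := hmlt (r.val+1+(0:Fin (n+1)).val); omega⟩ = u 0 :=
        uEq _ _ (by simp only [Fin.val_mk, Fin.val_zero]; rw [Nat.add_zero, hrv, Nat.mod_self])
      exact l1.trans (hclosed.trans ((uEq _ _
        (by simp only [Fin.val_last, Fin.val_succ]; omega)).trans (hr ▸ (hw r).2).symm))
  · rw [← hr, (hw r).1]
    apply uEq
    simp only [Fin.val_mk, Fin.val_last, Fin.coe_castSucc]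
    have : r.val + 1 + n = r.val + (n + 1) := by omega
    rw [this, Nat.add_mod_right, Nat.mod_eq_of_lt hrn]

theorem aux_count_end {V E : Type} [Fintype V] [DecidableEq V] [Fintype E]
    (tail head : E → V) (m : ℕ) (u : Fin (m+1) → V) (f : Fin m → E)
    (hw : IsWalk tail head u f) (hf : Function.Injective f) (hm : 1 ≤ m)
    (hclo : ∀ g : E, tail g = u (Fin.last m) → ∃ i, f i = g)
    (hne : u 0 ≠ u (Fin.last m)) :
    (Finset.univ.filter fun e' => tail e' = u (Fin.last m)).card <
      (Finset.univ.filter fun e' => head e' = u (Fin.last m)).card := by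
  classical
  set z := u (Fin.last m) with hz
  set A := Finset.univ.filter (fun i : Fin m => u i.castSucc = z) with hA
  set B := Finset.univ.filter (fun i : Fin m => u i.succ = z) with hB
  have step1 : (Finset.univ.filter fun e' => tail e' = z).card = A.card := by
    refine (Finset.card_bij (fun i _ => f i) ?_ ?_ ?_).symm
    · intro i hi
      simp only [hA, Finset.mem_filter, Finset.mem_univ, true_and] at hi
      simp only [Finset.mem_filter, Finset.mem_univ, true_and, (hw i).1, hi]
    · intro a ha b hb hab
      exact hf hab
    · intro g hg
      simp only [Finset.mem_filter, Finset.mem_univ, true_and] at hg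
      obtain ⟨i, hi⟩ := hclo g hg
      refine ⟨i, ?_, hi⟩
      simp only [hA, Finset.mem_filter, Finset.mem_univ, true_and, ← (hw i).1, hi, hg]
  have step2 : B.card ≤ (Finset.univ.filter fun e' => head e' = z).card := by
    refine Finset.card_le_card_of_injOn (fun i => f i) ?_ (hf.injOn)
    intro i hi
    simp only [hB, Finset.mem_coe, Finset.mem_filter, Finset.mem_univ, true_and] at hi
    simp only [Finset.mem_coe, Finset.mem_filter, Finset.mem_univ, true_and, (hw i).2, hi]
  have step3 : A.card < B.card := by
    have hlB : (⟨m - 1, by omega⟩ : Fin m) ∈ B := by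
      simp only [hB, Finset.mem_filter, Finset.mem_univ, true_and]
      have : (⟨m - 1, by omega⟩ : Fin m).succ = Fin.last m := by
        apply Fin.ext
        simp only [Fin.val_succ, Fin.val_mk, Fin.val_last]
        omega
      rw [this]
    have hA0 : ∀ i ∈ A, 0 < i.val := by
      intro i hi
      simp only [hA, Finset.mem_filter, Finset.mem_univ, true_and] at hi
      by_contra h
      apply hne
      rw [← hi]
      exact congrArg u (Fin.ext (by simp only [Fin.val_zero, Fin.coe_castSucc]; omega))
    have hcardle : A.card ≤ (B.erase ⟨m - 1, by omega⟩).card := by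
      refine Finset.card_le_card_of_injOn (fun i => (⟨i.val - 1, by omega⟩ : Fin m)) ?_ ?_
      · intro i hi
        have h0 := hA0 i hi
        simp only [hA, Finset.mem_coe, Finset.mem_filter, Finset.mem_univ, true_and] at hi
        have him := i.isLt
        rw [Finset.mem_coe, Finset.mem_erase]
        constructor
        · intro hcon
          have := congrArg Fin.val hcon
          simp only [Fin.val_mk] at this
          omega
        · simp only [hB, Finset.mem_filter, Finset.mem_univ, true_and]
          have : (⟨i.val - 1, by omega⟩ : Fin m).succ = i.castSucc := by
            apply Fin.ext
            simp only [Fin.val_succ, Fin.val_mk, Fin.coe_castSucc]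
            omega
          rw [this, hi]
      · intro a ha b hb hab
        have h0a := hA0 a ha
        have h0b := hA0 b hb
        have := congrArg Fin.val hab
        simp only [Fin.val_mk] at this
        exact Fin.ext (by omega)
    rw [Finset.card_erase_of_mem hlB] at hcardle
    have hBpos : 0 < B.card := Finset.card_pos.mpr ⟨_, hlB⟩
    omega
  rw [step1]
  exact lt_of_lt_of_le step3 step2


/-- if an edge `e` of a finite directed multigraph lies on no
directed cycle, then there is a directed trail through `e` starting at a vertex
`u₀` with deg⁺(u₀) > deg⁻(u₀), ending at a different vertex `z` with
deg⁻(z) > deg⁺(z). -/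
theorem trail_through_acyclic_edge (V E : Type) [Fintype V] [DecidableEq V]
    [Fintype E] (tail head : E → V) (e : E)
    (hnocycle : ¬ ∃ (m : ℕ) (u : Fin (m + 1) → V) (f : Fin m → E),
      IsCycle tail head u f ∧ ∃ r, f r = e) :
    ∃ (m : ℕ) (u : Fin (m + 1) → V) (f : Fin m → E),
      IsWalk tail head u f ∧ Function.Injective f ∧ (∃ r, f r = e) ∧
      (Finset.univ.filter fun e' => head e' = u 0).card <
        (Finset.univ.filter fun e' => tail e' = u 0).card ∧
      (Finset.univ.filter fun e' => tail e' = u (Fin.last m)).card <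
        (Finset.univ.filter fun e' => head e' = u (Fin.last m)).card ∧
      u 0 ≠ u (Fin.last m) := by
  classical
  set P : ℕ → Prop := fun m => ∃ (u : Fin (m+1) → V) (f : Fin m → E),
    IsWalk tail head u f ∧ Function.Injective f ∧ ∃ r, f r = e with hPdef
  have hP1 : P 1 := by
    refine ⟨![tail e, head e], ![e], ?_, fun a b _ => Subsingleton.elim a b, 0, rfl⟩
    intro r
    fin_cases r
    exact ⟨rfl, rfl⟩
  have hbound : ∀ k, P k → k ≤ Fintype.card E := by
    rintro k ⟨u, f, _, hf, _⟩
    simpa using Fintype.card_le_of_injective f hf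
  obtain ⟨M, hPM, hmax⟩ : ∃ M, P M ∧ ∀ k, P k → k ≤ M :=
    ⟨Nat.findGreatest P (Fintype.card E),
     Nat.findGreatest_spec (hbound 1 hP1) hP1,
     fun k hk => Nat.le_findGreatest (hbound k hk) hk⟩
  have hM1 : 1 ≤ M := hmax 1 hP1
  obtain ⟨n, rfl⟩ : ∃ n, M = n + 1 := ⟨M - 1, by omega⟩
  obtain ⟨u, f, hw, hf, r, hr⟩ := hPM
  -- maximality: every edge leaving the last vertex is on the trail
  have hend : ∀ g : E, tail g = u (Fin.last (n+1)) → ∃ i, f i = g := by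
    intro g hg
    by_contra hng
    push_neg at hng
    have hP2 : P (n + 1 + 1) := by
      refine ⟨Fin.snoc u (head g), Fin.snoc f g, ?_, ?_,
        r.castSucc, by rw [Fin.snoc_castSucc, hr]⟩
      · intro k
        induction k using Fin.lastCases with
        | last =>
          constructor
          · rw [Fin.snoc_last, Fin.snoc_castSucc, hg]
          · rw [Fin.snoc_last, Fin.succ_last, Fin.snoc_last]
        | cast i =>
          constructor
          · rw [Fin.snoc_castSucc, Fin.snoc_castSucc]
            exact (hw i).1
          · rw [Fin.snoc_castSucc, Fin.succ_castSucc, Fin.snoc_castSucc]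
            exact (hw i).2
      · intro a b hab
        induction a using Fin.lastCases with
        | last =>
          induction b using Fin.lastCases with
          | last => rfl
          | cast j =>
            rw [Fin.snoc_last, Fin.snoc_castSucc] at hab
            exact absurd hab.symm (hng j)
        | cast i =>
          induction b using Fin.lastCases with
          | last =>
            rw [Fin.snoc_last, Fin.snoc_castSucc] at hab
            exact absurd hab (hng i)
          | cast j =>
            rw [Fin.snoc_castSucc, Fin.snoc_castSucc] at hab
            rw [hf hab]
    have := hmax _ hP2
    omega
  -- maximality: every edge entering the first vertex is on the trail
  have hstart : ∀ g : E, head g = u 0 → ∃ i, f i = g := by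
    intro g hg
    by_contra hng
    push_neg at hng
    have hP2 : P (n + 1 + 1) := by
      refine ⟨Fin.cons (tail g) u, Fin.cons g f, ?_, ?_,
        r.succ, by rw [Fin.cons_succ, hr]⟩
      · intro k
        induction k using Fin.cases with
        | zero =>
          constructor
          · rw [Fin.cons_zero, Fin.castSucc_zero, Fin.cons_zero]
          · rw [Fin.cons_zero]
            have : (0 : Fin (n+1+1)).succ = Fin.succ 0 := rfl
            rw [this, Fin.cons_succ, hg]
        | succ i =>
          constructor
          · rw [Fin.cons_succ, ← Fin.succ_castSucc, Fin.cons_succ]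
            exact (hw i).1
          · rw [Fin.cons_succ, Fin.cons_succ]
            exact (hw i).2
      · intro a b hab
        induction a using Fin.cases with
        | zero =>
          induction b using Fin.cases with
          | zero => rfl
          | succ j =>
            rw [Fin.cons_zero, Fin.cons_succ] at hab
            exact absurd hab.symm (hng j)
        | succ i =>
          induction b using Fin.cases with
          | zero =>
            rw [Fin.cons_zero, Fin.cons_succ] at hab
            exact absurd hab (hng i)
          | succ j =>
            rw [Fin.cons_succ, Fin.cons_succ] at hab
            rw [hf hab]
    have := hmax _ hP2
    omega
  -- the trail is not closed, else e would lie on a cycle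
  have hne0 : u 0 ≠ u (Fin.last (n+1)) := by
    intro heq
    obtain ⟨k, w, g, hwg, h0, hl⟩ := aux_walk_head_tail tail head e n u f hw heq r hr
    obtain ⟨k', p, g', hpw, hpinj, hp0, hpl⟩ :=
      aux_exists_injective_walk tail head (head e) (tail e) k ⟨w, g, hwg, h0, hl⟩
    exact hnocycle (aux_cycle_of_path tail head e k' p g' hpw hpinj hp0 hpl)
  -- counting at the last vertex
  have hcount2 := aux_count_end tail head (n+1) u f hw hf (by omega) hend hne0
  -- counting at the first vertex, via the reversed walk
  have uEq : ∀ (a b : Fin (n+2)), a.val = b.val → u a = u b :=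
    fun a b h => congrArg u (Fin.ext h)
  have hw' : IsWalk head tail (fun k => u k.rev) (fun k => f k.rev) := by
    intro k
    have hk := k.isLt
    constructor
    · rw [(hw k.rev).2]
      apply uEq
      simp only [Fin.val_succ, Fin.val_rev, Fin.coe_castSucc]
      omega
    · rw [(hw k.rev).1]
      apply uEq
      simp only [Fin.val_succ, Fin.val_rev, Fin.coe_castSucc]
      omega
  have hf' : Function.Injective (fun k : Fin (n+1) => f k.rev) :=
    fun a b h => Fin.rev_injective (hf h)
  have elast : u (Fin.last (n+1)).rev = u 0 := uEq _ _ (by simp [Fin.val_rev])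
  have e0 : u (0 : Fin (n+2)).rev = u (Fin.last (n+1)) :=
    uEq _ _ (by simp [Fin.val_rev])
  have hclo' : ∀ g : E, head g = (fun k : Fin (n+2) => u k.rev) (Fin.last (n+1)) →
      ∃ i, (fun k : Fin (n+1) => f k.rev) i = g := by
    intro g hg
    have hg' : head g = u 0 := hg.trans elast
    obtain ⟨i, hi⟩ := hstart g hg'
    exact ⟨i.rev, by simp only [Fin.rev_rev]; exact hi⟩
  have hne' : (fun k : Fin (n+2) => u k.rev) 0 ≠
      (fun k : Fin (n+2) => u k.rev) (Fin.last (n+1)) := by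
    intro h
    exact hne0 ((elast.symm.trans h.symm).trans e0)
  have hcount1 := aux_count_end head tail (n+1) (fun k => u k.rev) (fun k => f k.rev)
    hw' hf' (by omega) hclo' hne'
  simp only [elast] at hcount1
  exact ⟨n + 1, u, f, hw, hf, ⟨r, hr⟩, hcount1, hcount2, hne0⟩
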